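/- Let E be a finite-dimensional real inner product space and let X, Y, Z be subsets of E such that Y is closed and convex, Z is nonempty and bounded, and X + Z ⊆ Y + Z (Minkowski sums). Then X ⊆ Y. -/
import Mathlib


open Pointwise Filter Topology

theorem cancellation_of_minkowski_sum
    {E : Type*} [NormedAddCommGroup E] [InnerProductSpace ℝ E] [FiniteDimensional ℝ E]
    (X Y Z : Set E)
    (hYcl : IsClosed Y) (hYconv : Convex ℝ Y)
    (hZne : Z.Nonempty) (hZb : Bornology.IsBounded Z)
    (h : X + Z ⊆ Y + Z) :
    X ⊆ Y := by
  obtain ⟨C, hC⟩ := hZb.exists_norm_le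
  intro x hx
  obtain ⟨z₀, hz₀⟩ := hZne
  have step : ∀ w : Z, ∃ w' : Z, x + (w : E) - (w' : E) ∈ Y := by
    rintro ⟨w, hw⟩
    obtain ⟨y, hy, w', hw', hEq⟩ := h (Set.add_mem_add hx hw)
    exact ⟨⟨w', hw'⟩, by rw [← hEq, add_sub_cancel_right]; exact hy⟩
  choose f hf using step
  set zs : ℕ → Z := fun n => f^[n] ⟨z₀, hz₀⟩ with hzs
  set y : ℕ → E := fun n => x + (zs n : E) - (zs (n + 1) : E) with hy
  have hyY : ∀ n, y n ∈ Y := by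
    intro n
    have : zs (n + 1) = f (zs n) := Function.iterate_succ_apply' f n _
    simpa [hy, this] using hf (zs n)
  have hsum : ∀ n, ∑ i ∈ Finset.range n, y i = n • x + (zs 0 : E) - (zs n : E) := by
    intro n
    induction n with
    | zero => simp
    | succ n ih =>
      rw [Finset.sum_range_succ, ih, hy]
      simp [succ_nsmul]
      abel
  have hcY : ∀ n : ℕ, 0 < n → x + (n : ℝ)⁻¹ • ((zs 0 : E) - (zs n : E)) ∈ Y := by
    intro n hn
    have hn' : (n : ℝ) ≠ 0 := Nat.cast_ne_zero.mpr hn.ne'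
    have : (n : ℝ)⁻¹ • (∑ i ∈ Finset.range n, y i) ∈ Y := by
      rw [Finset.smul_sum]
      refine hYconv.sum_mem (fun i _ => by positivity) ?_ (fun i _ => hyY i)
      simp [Finset.sum_const, hn']
    rw [hsum] at this
    have hrw : (n : ℝ)⁻¹ • ((n • x : E) + (zs 0 : E) - (zs n : E))
        = x + (n : ℝ)⁻¹ • ((zs 0 : E) - (zs n : E)) := by
      rw [smul_sub, smul_add, sub_eq_add_neg, sub_eq_add_neg, smul_add, smul_neg]
      have : (n : ℝ)⁻¹ • (n • x : E) = x := by
        rw [← Nat.cast_smul_eq_nsmul ℝ, smul_smul, inv_mul_cancel₀ hn', one_smul]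
      rw [this]; abel
    rwa [hrw] at this
  have htend : Tendsto (fun n : ℕ => x + (n : ℝ)⁻¹ • ((zs 0 : E) - (zs n : E))) atTop (𝓝 x) := by
    have h0 : Tendsto (fun n : ℕ => (n : ℝ)⁻¹ • ((zs 0 : E) - (zs n : E))) atTop (𝓝 0) := by
      apply squeeze_zero_norm (a := fun n : ℕ => (n : ℝ)⁻¹ * (2 * C))
      · intro n
        rw [norm_smul, norm_inv, Real.norm_natCast]
        gcongr
        calc ‖(zs 0 : E) - (zs n : E)‖ ≤ ‖(zs 0 : E)‖ + ‖(zs n : E)‖ := norm_sub_le _ _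
          _ ≤ C + C := add_le_add (hC _ (zs 0).2) (hC _ (zs n).2)
          _ = 2 * C := by ring
      · simpa using (tendsto_inv_atTop_nhds_zero_nat.mul_const (2 * C))
    simpa using tendsto_const_nhds.add h0
  have := hYcl.mem_of_tendsto htend (eventually_atTop.mpr ⟨1, fun n hn => hcY n hn⟩)
  exact this
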